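/- Let A ∈ ℝ^{m×n} be entrywise nonnegative, let L := [[0_{n×n}, Aᵀ],[A, 0_{m×m}]] ∈ ℝ^{(n+m)×(n+m)}, and suppose Ã ∈ ℝ^{(n+m)×(n+m)} is entrywise nonnegative with Ã ⊵_ε L. Writing Ã in blocks conforming with L as Ã = [[Ã₁₁, Ã₁₂],[Ã₂₁, Ã₂₂]] with Ã₁₁ ∈ ℝ^{n×n}, Ã₁₂ ∈ ℝ^{n×m}, Ã₂₁ ∈ ℝ^{m×n}, Ã₂₂ ∈ ℝ^{m×m}, the following hold: (1) Ã₁₁ = 0 and Ã₂₂ = 0; (2) Ã₂₁ ⊵_ε A and Ã₁₂ ⊵_ε Aᵀ. -/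

import Mathlib

open Matrix ComplexOrder

/-- Row-sum degree matrix of `A`. -/
def rowDeg {α β : Type*} [Fintype α] [Fintype β] [DecidableEq α]
    (A : Matrix α β ℝ) : Matrix α α ℝ :=
  Matrix.diagonal fun i => ∑ j, A i j

/-- Column-sum degree matrix of `A`. -/
def colDeg {α β : Type*} [Fintype α] [Fintype β] [DecidableEq β]
    (A : Matrix α β ℝ) : Matrix β β ℝ :=
  Matrix.diagonal fun j => ∑ i, A i j

/-- The error matrix `E := D_row − A · D_col⁻ · Aᵀ` (with `0⁻¹ = 0`). -/
noncomputable def errE {α β : Type*} [Fintype α] [Fintype β] [DecidableEq α] [DecidableEq β]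
    (A : Matrix α β ℝ) : Matrix α α ℝ :=
  rowDeg A - A * Matrix.diagonal (fun j => (∑ i, A i j)⁻¹) * Aᵀ

/-- The error matrix `F := D_col − Aᵀ · D_row⁻ · A` (with `0⁻¹ = 0`). -/
noncomputable def errF {α β : Type*} [Fintype α] [Fintype β] [DecidableEq α] [DecidableEq β]
    (A : Matrix α β ℝ) : Matrix β β ℝ :=
  colDeg A - Aᵀ * Matrix.diagonal (fun i => (∑ j, A i j)⁻¹) * A

/-- `Ã ⊵_ε A`: `Ã` is an `ε`-SV approximation of the entrywise-nonnegative matrix `A`,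
with degree matrices given by the row and column sums of `A` (real matrices viewed as
complex for the bilinear-form inequality). -/
noncomputable def IsSVgApprox {α β : Type*} [Fintype α] [Fintype β] [DecidableEq α]
    [DecidableEq β] (ε : ℝ) (A Atil : Matrix α β ℝ) : Prop :=
  (errE A).PosSemidef ∧ (errF A).PosSemidef ∧
  ∀ (x : α → ℂ) (y : β → ℂ),
    ‖star x ⬝ᵥ ((Atil - A).map fun a => (a : ℂ)).mulVec y‖ ≤
      ε / 4 * ((star x ⬝ᵥ ((errE A).map fun a => (a : ℂ)).mulVec x).re +
        (star y ⬝ᵥ ((errF A).map fun a => (a : ℂ)).mulVec y).re)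

section helpers
set_option linter.unusedSectionVars false
variable {a b : Type*} [Fintype a] [Fintype b] [DecidableEq a] [DecidableEq b]

private lemma errE_L {m n : ℕ} (A : Matrix (Fin m) (Fin n) ℝ) :
    errE (Matrix.fromBlocks 0 Aᵀ A 0) = Matrix.fromBlocks (errF A) 0 0 (errE A) := by
  unfold errE errF rowDeg colDeg
  have h1 : (fun s => ∑ t, (Matrix.fromBlocks 0 Aᵀ A 0 : Matrix (Fin n ⊕ Fin m) (Fin n ⊕ Fin m) ℝ) s t)
      = Sum.elim (fun j => ∑ i, A i j) (fun i => ∑ j, A i j) := by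
    funext s; cases s <;> simp [Fintype.sum_sum_type]
  have h2 : (fun t => (∑ s, (Matrix.fromBlocks 0 Aᵀ A 0 : Matrix (Fin n ⊕ Fin m) (Fin n ⊕ Fin m) ℝ) s t)⁻¹)
      = Sum.elim (fun j => (∑ i, A i j)⁻¹) (fun i => (∑ j, A i j)⁻¹) := by
    funext t; cases t <;> simp [Fintype.sum_sum_type]
  rw [h1, h2, ← Matrix.fromBlocks_diagonal, ← Matrix.fromBlocks_diagonal,
    Matrix.fromBlocks_transpose, Matrix.fromBlocks_multiply, Matrix.fromBlocks_multiply]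
  simp only [Matrix.zero_mul, Matrix.mul_zero, zero_add, add_zero, Matrix.transpose_zero,
    Matrix.transpose_transpose]
  ext (i|i) (j|j) <;> simp [Matrix.fromBlocks, Matrix.sub_apply]

private lemma errF_L {m n : ℕ} (A : Matrix (Fin m) (Fin n) ℝ) :
    errF (Matrix.fromBlocks 0 Aᵀ A 0) = Matrix.fromBlocks (errF A) 0 0 (errE A) := by
  unfold errE errF rowDeg colDeg
  have h1 : (fun s => (∑ t, (Matrix.fromBlocks 0 Aᵀ A 0 : Matrix (Fin n ⊕ Fin m) (Fin n ⊕ Fin m) ℝ) s t)⁻¹)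
      = Sum.elim (fun j => (∑ i, A i j)⁻¹) (fun i => (∑ j, A i j)⁻¹) := by
    funext s; cases s <;> simp [Fintype.sum_sum_type]
  have h2 : (fun t => ∑ s, (Matrix.fromBlocks 0 Aᵀ A 0 : Matrix (Fin n ⊕ Fin m) (Fin n ⊕ Fin m) ℝ) s t)
      = Sum.elim (fun j => ∑ i, A i j) (fun i => ∑ j, A i j) := by
    funext t; cases t <;> simp [Fintype.sum_sum_type]
  rw [h1, h2, ← Matrix.fromBlocks_diagonal, ← Matrix.fromBlocks_diagonal,
    Matrix.fromBlocks_transpose, Matrix.fromBlocks_multiply, Matrix.fromBlocks_multiply]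
  simp only [Matrix.zero_mul, Matrix.mul_zero, zero_add, add_zero, Matrix.transpose_zero,
    Matrix.transpose_transpose]
  ext (i|i) (j|j) <;> simp [Matrix.fromBlocks, Matrix.sub_apply]

private lemma star_sum_elim (x : a → ℂ) (y : b → ℂ) :
    star (Sum.elim x y) = Sum.elim (star x) (star y) := by
  funext s; cases s <;> rfl

private lemma bilin (M : Matrix (a ⊕ b) (a ⊕ b) ℂ) (x₁ : a → ℂ) (x₂ : b → ℂ)
    (y₁ : a → ℂ) (y₂ : b → ℂ) :
    star (Sum.elim x₁ x₂) ⬝ᵥ M.mulVec (Sum.elim y₁ y₂) =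
      star x₁ ⬝ᵥ M.toBlocks₁₁.mulVec y₁ + star x₁ ⬝ᵥ M.toBlocks₁₂.mulVec y₂ +
      (star x₂ ⬝ᵥ M.toBlocks₂₁.mulVec y₁ + star x₂ ⬝ᵥ M.toBlocks₂₂.mulVec y₂) := by
  conv_lhs => rw [← Matrix.fromBlocks_toBlocks M]
  rw [Matrix.fromBlocks_mulVec, star_sum_elim, sumElim_dotProduct_sumElim,
    dotProduct_add, dotProduct_add]
  simp [Sum.elim_comp_inl, Sum.elim_comp_inr]

private lemma quadC (P : Matrix a a ℝ) (Q : Matrix b b ℝ) (x : a → ℂ) (y : b → ℂ) :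
    star (Sum.elim x y) ⬝ᵥ ((Matrix.fromBlocks P 0 0 Q).map fun r => (r : ℂ)).mulVec (Sum.elim x y)
      = star x ⬝ᵥ (P.map fun r => (r : ℂ)).mulVec x + star y ⬝ᵥ (Q.map fun r => (r : ℂ)).mulVec y := by
  rw [bilin]
  simp [Matrix.fromBlocks_map, Matrix.toBlocks_fromBlocks₁₁, Matrix.toBlocks_fromBlocks₁₂,
    Matrix.toBlocks_fromBlocks₂₁, Matrix.toBlocks_fromBlocks₂₂, Matrix.map_zero]

private lemma quadR (P : Matrix a a ℝ) (Q : Matrix b b ℝ) (x : a → ℝ) (y : b → ℝ) :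
    star (Sum.elim x y) ⬝ᵥ (Matrix.fromBlocks P 0 0 Q).mulVec (Sum.elim x y)
      = star x ⬝ᵥ P.mulVec x + star y ⬝ᵥ Q.mulVec y := by
  have hs : star (Sum.elim x y) = Sum.elim (star x) (star y) := by
    funext s; cases s <;> rfl
  rw [Matrix.fromBlocks_mulVec, hs, sumElim_dotProduct_sumElim]
  simp

private lemma errE_transpose (A : Matrix a b ℝ) : errE Aᵀ = errF A := by
  simp [errE, errF, rowDeg, colDeg, Matrix.transpose_transpose]

private lemma errF_transpose (A : Matrix a b ℝ) : errF Aᵀ = errE A := by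
  simp [errE, errF, rowDeg, colDeg, Matrix.transpose_transpose]

private lemma sum_errF (A : Matrix a b ℝ) (hA : ∀ i j, 0 ≤ A i j) (j' : b) :
    ∑ j, errF A j' j = 0 := by
  have key : ∀ i, A i j' * (∑ j, A i j)⁻¹ * (∑ j, A i j) = A i j' := by
    intro i
    rcases eq_or_ne (∑ j, A i j) 0 with h | h
    · have hz : A i j' = 0 :=
        (Finset.sum_eq_zero_iff_of_nonneg (fun j _ => hA i j)).mp h j' (Finset.mem_univ _)
      simp [hz]
    · field_simp
  have hmul : ∀ j, (Aᵀ * Matrix.diagonal (fun i => (∑ k, A i k)⁻¹) * A) j' j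
      = ∑ i, A i j' * (∑ k, A i k)⁻¹ * A i j := by
    intro j
    rw [Matrix.mul_apply]
    exact Finset.sum_congr rfl fun i _ => by rw [Matrix.mul_diagonal, Matrix.transpose_apply]
  have h2 : ∑ j, ∑ i, A i j' * (∑ k, A i k)⁻¹ * A i j = ∑ i, A i j' := by
    rw [Finset.sum_comm]
    refine Finset.sum_congr rfl fun i _ => ?_
    rw [← Finset.mul_sum, mul_assoc, ← mul_assoc]
    exact key i
  simp only [errF, colDeg, Matrix.sub_apply, Finset.sum_sub_distrib, hmul, h2,
    Matrix.diagonal_apply]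
  simp [Finset.sum_ite_eq]

private lemma mulVec_one_errF (A : Matrix a b ℝ) (hA : ∀ i j, 0 ≤ A i j) :
    ((errF A).map fun r => (r : ℂ)).mulVec (fun _ => 1) = 0 := by
  funext j'
  simp only [Matrix.mulVec, dotProduct, Matrix.map_apply, mul_one, Pi.zero_apply]
  rw [← Complex.ofReal_sum, sum_errF A hA j', Complex.ofReal_zero]

private lemma one_quad (N : Matrix a b ℝ) :
    star (fun _ => (1:ℂ)) ⬝ᵥ (N.map fun r => (r:ℂ)).mulVec (fun _ => 1)
      = ((∑ i, ∑ j, N i j : ℝ) : ℂ) := by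
  simp only [Matrix.mulVec, dotProduct, Matrix.map_apply, mul_one, Pi.star_apply, star_one, one_mul]
  push_cast
  rfl

private lemma toBlocks₁₁_sub_map (M : Matrix (a ⊕ b) (a ⊕ b) ℝ) (P : Matrix a a ℝ)
    (Q : Matrix a b ℝ) (R : Matrix b a ℝ) (S : Matrix b b ℝ) :
    ((M - Matrix.fromBlocks P Q R S).map fun r => (r:ℂ)).toBlocks₁₁
      = (M.toBlocks₁₁ - P).map fun r => (r:ℂ) := by
  ext i j; simp [Matrix.toBlocks₁₁, Matrix.map_apply, Matrix.sub_apply]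

private lemma toBlocks₁₂_sub_map (M : Matrix (a ⊕ b) (a ⊕ b) ℝ) (P : Matrix a a ℝ)
    (Q : Matrix a b ℝ) (R : Matrix b a ℝ) (S : Matrix b b ℝ) :
    ((M - Matrix.fromBlocks P Q R S).map fun r => (r:ℂ)).toBlocks₁₂
      = (M.toBlocks₁₂ - Q).map fun r => (r:ℂ) := by
  ext i j; simp [Matrix.toBlocks₁₂, Matrix.map_apply, Matrix.sub_apply]

private lemma toBlocks₂₁_sub_map (M : Matrix (a ⊕ b) (a ⊕ b) ℝ) (P : Matrix a a ℝ)
    (Q : Matrix a b ℝ) (R : Matrix b a ℝ) (S : Matrix b b ℝ) :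
    ((M - Matrix.fromBlocks P Q R S).map fun r => (r:ℂ)).toBlocks₂₁
      = (M.toBlocks₂₁ - R).map fun r => (r:ℂ) := by
  ext i j; simp [Matrix.toBlocks₂₁, Matrix.map_apply, Matrix.sub_apply]

private lemma toBlocks₂₂_sub_map (M : Matrix (a ⊕ b) (a ⊕ b) ℝ) (P : Matrix a a ℝ)
    (Q : Matrix a b ℝ) (R : Matrix b a ℝ) (S : Matrix b b ℝ) :
    ((M - Matrix.fromBlocks P Q R S).map fun r => (r:ℂ)).toBlocks₂₂
      = (M.toBlocks₂₂ - S).map fun r => (r:ℂ) := by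
  ext i j; simp [Matrix.toBlocks₂₂, Matrix.map_apply, Matrix.sub_apply]

end helpers

/-- any nonnegative SV sparsifier of the symmetric bipartite lift
`L = [[0, Aᵀ],[A, 0]]` of a nonnegative matrix `A` must itself be bipartite (its diagonal
blocks vanish), and its off-diagonal blocks SV-approximate `A` and `Aᵀ` respectively. -/
theorem stmt_18 {m n : ℕ} (A : Matrix (Fin m) (Fin n) ℝ) (hA : ∀ i j, 0 ≤ A i j)
    (Atil : Matrix (Fin n ⊕ Fin m) (Fin n ⊕ Fin m) ℝ)
    (hAtil : ∀ i j, 0 ≤ Atil i j)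
    (ε : ℝ) (hε : 0 ≤ ε)
    (hSV : IsSVgApprox ε (Matrix.fromBlocks 0 Aᵀ A 0) Atil) :
    (Atil.toBlocks₁₁ = 0 ∧ Atil.toBlocks₂₂ = 0) ∧
    IsSVgApprox ε A Atil.toBlocks₂₁ ∧
    IsSVgApprox ε Aᵀ Atil.toBlocks₁₂ := by
  obtain ⟨hE, hF, hineq⟩ := hSV
  rw [errE_L] at hE
  rw [errF_L] at hF
  -- PSD of the diagonal blocks
  have hFA : (errF A).PosSemidef := by
    refine Matrix.PosSemidef.of_dotProduct_mulVec_nonneg ?_ ?_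
    · have h1 : (Matrix.fromBlocks (errF A) 0 0 (errE A))ᴴ
          = Matrix.fromBlocks (errF A) 0 0 (errE A) := hE.1
      rw [Matrix.fromBlocks_conjTranspose] at h1
      have h2 := congrArg Matrix.toBlocks₁₁ h1
      simpa [Matrix.toBlocks_fromBlocks₁₁, Matrix.IsSymm] using h2
    · intro x
      have h := hE.dotProduct_mulVec_nonneg (Sum.elim x 0)
      rwa [quadR, Matrix.mulVec_zero, dotProduct_zero, add_zero] at h
  have hEA : (errE A).PosSemidef := by
    refine Matrix.PosSemidef.of_dotProduct_mulVec_nonneg ?_ ?_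
    · have h1 : (Matrix.fromBlocks (errF A) 0 0 (errE A))ᴴ
          = Matrix.fromBlocks (errF A) 0 0 (errE A) := hE.1
      rw [Matrix.fromBlocks_conjTranspose] at h1
      have h2 := congrArg Matrix.toBlocks₂₂ h1
      simpa [Matrix.toBlocks_fromBlocks₂₂, Matrix.IsSymm] using h2
    · intro x
      have h := hE.dotProduct_mulVec_nonneg (Sum.elim 0 x)
      rwa [quadR, Matrix.mulVec_zero, dotProduct_zero, zero_add] at h
  -- diagonal blocks of Atil vanish
  have h11 : Atil.toBlocks₁₁ = 0 := by
    have h := hineq (Sum.elim (fun _ => (1:ℂ)) 0) (Sum.elim (fun _ => (1:ℂ)) 0)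
    rw [errE_L, errF_L, quadC, mulVec_one_errF A hA, bilin,
      toBlocks₁₁_sub_map, toBlocks₁₂_sub_map, toBlocks₂₁_sub_map, toBlocks₂₂_sub_map] at h
    simp only [Matrix.toBlocks_fromBlocks₁₁, Matrix.toBlocks_fromBlocks₁₂,
      Matrix.toBlocks_fromBlocks₂₁, Matrix.toBlocks_fromBlocks₂₂, sub_zero,
      Matrix.mulVec_zero, dotProduct_zero, star_zero, zero_dotProduct, add_zero, zero_add,
      Complex.zero_re, mul_zero, one_quad] at h
    have habs : |∑ i, ∑ j, Atil.toBlocks₁₁ i j| ≤ 0 := by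
      simpa [← Complex.ofReal_sum, Complex.norm_real, Real.norm_eq_abs] using h
    have hsum : ∑ i, ∑ j, Atil.toBlocks₁₁ i j = 0 := abs_nonpos_iff.mp habs
    ext i j
    have h1 := (Finset.sum_eq_zero_iff_of_nonneg
      (fun i _ => Finset.sum_nonneg fun j _ => hAtil (Sum.inl i) (Sum.inl j))).mp hsum i
      (Finset.mem_univ _)
    have h2 := (Finset.sum_eq_zero_iff_of_nonneg
      (fun j _ => hAtil (Sum.inl i) (Sum.inl j))).mp h1 j (Finset.mem_univ _)
    simpa [Matrix.toBlocks₁₁] using h2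
  have h22 : Atil.toBlocks₂₂ = 0 := by
    have h := hineq (Sum.elim 0 (fun _ => (1:ℂ))) (Sum.elim 0 (fun _ => (1:ℂ)))
    rw [errE_L, errF_L, quadC, bilin,
      toBlocks₁₁_sub_map, toBlocks₁₂_sub_map, toBlocks₂₁_sub_map, toBlocks₂₂_sub_map] at h
    have hEone : ((errE A).map fun r => (r:ℂ)).mulVec (fun _ => 1) = 0 := by
      rw [← errF_transpose]
      exact mulVec_one_errF Aᵀ (fun i j => hA j i)
    rw [hEone] at h
    simp only [Matrix.toBlocks_fromBlocks₁₁, Matrix.toBlocks_fromBlocks₁₂,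
      Matrix.toBlocks_fromBlocks₂₁, Matrix.toBlocks_fromBlocks₂₂, sub_zero,
      Matrix.mulVec_zero, dotProduct_zero, star_zero, zero_dotProduct, add_zero, zero_add,
      Complex.zero_re, mul_zero, one_quad] at h
    have habs : |∑ i, ∑ j, Atil.toBlocks₂₂ i j| ≤ 0 := by
      simpa [← Complex.ofReal_sum, Complex.norm_real, Real.norm_eq_abs] using h
    have hsum : ∑ i, ∑ j, Atil.toBlocks₂₂ i j = 0 := abs_nonpos_iff.mp habs
    ext i j
    have h1 := (Finset.sum_eq_zero_iff_of_nonneg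
      (fun i _ => Finset.sum_nonneg fun j _ => hAtil (Sum.inr i) (Sum.inr j))).mp hsum i
      (Finset.mem_univ _)
    have h2 := (Finset.sum_eq_zero_iff_of_nonneg
      (fun j _ => hAtil (Sum.inr i) (Sum.inr j))).mp h1 j (Finset.mem_univ _)
    simpa [Matrix.toBlocks₂₂] using h2
  refine ⟨⟨h11, h22⟩, ⟨hEA, hFA, ?_⟩, ⟨?_, ?_, ?_⟩⟩
  · intro x y
    have h := hineq (Sum.elim 0 x) (Sum.elim y 0)
    rw [errE_L, errF_L, quadC, quadC, bilin,
      toBlocks₁₁_sub_map, toBlocks₁₂_sub_map, toBlocks₂₁_sub_map, toBlocks₂₂_sub_map] at h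
    simpa only [Matrix.toBlocks_fromBlocks₁₁, Matrix.toBlocks_fromBlocks₁₂,
      Matrix.toBlocks_fromBlocks₂₁, Matrix.toBlocks_fromBlocks₂₂, sub_zero,
      Matrix.mulVec_zero, dotProduct_zero, star_zero, zero_dotProduct, add_zero, zero_add,
      Complex.zero_re] using h
  · rw [errE_transpose]; exact hFA
  · rw [errF_transpose]; exact hEA
  · intro x y
    have h := hineq (Sum.elim x 0) (Sum.elim 0 y)
    rw [errE_L, errF_L, quadC, quadC, bilin,
      toBlocks₁₁_sub_map, toBlocks₁₂_sub_map, toBlocks₂₁_sub_map, toBlocks₂₂_sub_map] at h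
    rw [errE_transpose, errF_transpose]
    simpa only [Matrix.toBlocks_fromBlocks₁₁, Matrix.toBlocks_fromBlocks₁₂,
      Matrix.toBlocks_fromBlocks₂₁, Matrix.toBlocks_fromBlocks₂₂, sub_zero,
      Matrix.mulVec_zero, dotProduct_zero, star_zero, zero_dotProduct, add_zero, zero_add,
      Complex.zero_re] using h
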